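/- Approximation Lemma. Let N ≥ 1 and let H be a cone of nonempty compact convex subsets of ℝ^N, i.e., a family closed under Minkowski addition and multiplication by nonnegative scalars. Let H* denote the dual cone consisting of all finite signed Borel measures μ on the unit sphere S_{N−1} such that ∫_{S_{N−1}} h_K dμ ≥ 0 for every K ∈ H. Then every μ ∈ H* is the limit, in the weak* topology of the dual space of C(S_{N−1}), of a sequence of finitely supported signed measures belonging to H*. -/

import Mathlib

open MeasureTheory Filter Topology Pointwise
open scoped NNReal ENNReal RealInnerProductSpace

/-- The support function of `K ⊆ ℝ^N`. -/
noncomputable def suppFn {N : ℕ} (K : Set (EuclideanSpace ℝ (Fin N)))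
    (x : EuclideanSpace ℝ (Fin N)) : ℝ :=
  sSup ((fun y => (inner ℝ x y : ℝ)) '' K)

/-- The integral of a function against a finite signed Borel measure, via the
Jordan decomposition.  This realizes the identification of finite signed Borel
measures with continuous linear functionals on `C(S_{N-1})`. -/
noncomputable def sintegral {α : Type*} [MeasurableSpace α]
    (μ : SignedMeasure α) (f : α → ℝ) : ℝ :=
  ∫ a, f a ∂μ.toJordanDecomposition.posPart -
    ∫ a, f a ∂μ.toJordanDecomposition.negPart

/-- A signed measure is finitely supported if it is a finite linear combination
of Dirac measures. -/
def FinitelySupported {α : Type*} [MeasurableSpace α]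
    (μ : SignedMeasure α) : Prop :=
  ∃ (m : ℕ) (c : Fin m → ℝ) (pts : Fin m → α),
    μ = ∑ k, c k • (Measure.dirac (pts k)).toSignedMeasure

namespace ApproxAux

variable {N : ℕ}

abbrev Sp (N : ℕ) := Metric.sphere (0 : EuclideanSpace ℝ (Fin N)) 1

lemma integrable_cont {V : Type*} [NormedAddCommGroup V] (P : Measure (Sp N))
    [IsFiniteMeasure P] {f : Sp N → V} (hf : Continuous f) : Integrable f P := by
  have := hf.continuousOn.integrableOn_compact (μ := P) (isCompact_univ (X := Sp N))
  simpa [IntegrableOn] using this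

/-- key computation lemma -/
lemma sintegral_eq_sub (σ : SignedMeasure (Sp N)) (P Q : Measure (Sp N))
    [IsFiniteMeasure P] [IsFiniteMeasure Q]
    (h : σ = P.toSignedMeasure - Q.toSignedMeasure)
    {f : Sp N → ℝ} (hf : Continuous f) :
    sintegral σ f = ∫ a, f a ∂P - ∫ a, f a ∂Q := by
  have hσ : σ = σ.toJordanDecomposition.posPart.toSignedMeasure
      - σ.toJordanDecomposition.negPart.toSignedMeasure :=
    (σ.toSignedMeasure_toJordanDecomposition).symm
  set pos := σ.toJordanDecomposition.posPart with hpos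
  set neg := σ.toJordanDecomposition.negPart with hneg
  have key : P + neg = Q + pos := by
    rw [← Measure.toSignedMeasure_eq_toSignedMeasure_iff,
      Measure.toSignedMeasure_add, Measure.toSignedMeasure_add]
    have h2 : P.toSignedMeasure - Q.toSignedMeasure
        = pos.toSignedMeasure - neg.toSignedMeasure := by rw [← h]; exact hσ
    rw [sub_eq_sub_iff_add_eq_add] at h2
    linear_combination (norm := abel) h2
  have hint : ∫ a, f a ∂(P + neg) = ∫ a, f a ∂(Q + pos) := by rw [key]
  rw [integral_add_measure (integrable_cont P hf) (integrable_cont neg hf),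
    integral_add_measure (integrable_cont Q hf) (integrable_cont pos hf)] at hint
  simp only [sintegral]
  linarith

lemma sintegral_zero {f : Sp N → ℝ} (hf : Continuous f) :
    sintegral (0 : SignedMeasure (Sp N)) f = 0 := by
  rw [sintegral_eq_sub 0 0 0 (by simp) hf]; simp

lemma sintegral_add (σ τ : SignedMeasure (Sp N)) {f : Sp N → ℝ} (hf : Continuous f) :
    sintegral (σ + τ) f = sintegral σ f + sintegral τ f := by
  have h1 : σ = σ.toJordanDecomposition.posPart.toSignedMeasure
      - σ.toJordanDecomposition.negPart.toSignedMeasure :=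
    (σ.toSignedMeasure_toJordanDecomposition).symm
  have h2 : τ = τ.toJordanDecomposition.posPart.toSignedMeasure
      - τ.toJordanDecomposition.negPart.toSignedMeasure :=
    (τ.toSignedMeasure_toJordanDecomposition).symm
  set p1 := σ.toJordanDecomposition.posPart
  set n1 := σ.toJordanDecomposition.negPart
  set p2 := τ.toJordanDecomposition.posPart
  set n2 := τ.toJordanDecomposition.negPart
  rw [sintegral_eq_sub (σ + τ) (p1 + p2) (n1 + n2)
    (by rw [Measure.toSignedMeasure_add, Measure.toSignedMeasure_add]
        conv_lhs => rw [h1, h2]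
        abel) hf,
    integral_add_measure (integrable_cont p1 hf) (integrable_cont p2 hf),
    integral_add_measure (integrable_cont n1 hf) (integrable_cont n2 hf)]
  simp only [sintegral]
  ring

lemma sintegral_smul (σ : SignedMeasure (Sp N)) (r : ℝ) {f : Sp N → ℝ} (hf : Continuous f) :
    sintegral (r • σ) f = r * sintegral σ f := by
  have hσ : σ = σ.toJordanDecomposition.posPart.toSignedMeasure
      - σ.toJordanDecomposition.negPart.toSignedMeasure :=
    (σ.toSignedMeasure_toJordanDecomposition).symm
  set pos := σ.toJordanDecomposition.posPart
  set neg := σ.toJordanDecomposition.negPart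
  set a := Real.toNNReal r with ha
  set b := Real.toNNReal (-r) with hb
  have hab : (a : ℝ) - (b : ℝ) = r := by
    rw [ha, hb, Real.coe_toNNReal', Real.coe_toNNReal']
    rcases le_total r 0 with h | h
    · rw [max_eq_right h, max_eq_left (by linarith)]; ring
    · rw [max_eq_left h, max_eq_right (by linarith)]; ring
  have hrep : r • σ = (a • pos + b • neg).toSignedMeasure
      - (b • pos + a • neg).toSignedMeasure := by
    rw [Measure.toSignedMeasure_add, Measure.toSignedMeasure_add,
      Measure.toSignedMeasure_smul, Measure.toSignedMeasure_smul,
      Measure.toSignedMeasure_smul, Measure.toSignedMeasure_smul]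
    conv_lhs => rw [hσ]
    rw [NNReal.smul_def, NNReal.smul_def, NNReal.smul_def, NNReal.smul_def]
    rw [← hab]
    module
  rw [sintegral_eq_sub _ _ _ hrep hf,
    integral_add_measure ((integrable_cont pos hf).smul_measure_nnreal)
      ((integrable_cont neg hf).smul_measure_nnreal),
    integral_add_measure ((integrable_cont pos hf).smul_measure_nnreal)
      ((integrable_cont neg hf).smul_measure_nnreal)]
  have ia : ∀ (P : Measure (Sp N)) (c : ℝ≥0), ∫ x, f x ∂((c : ℝ≥0) • P)
      = (c : ℝ) * ∫ x, f x ∂P := by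
    intro P c
    rw [integral_smul_nnreal_measure]
    simp [NNReal.smul_def, smul_eq_mul]
  rw [ia, ia, ia, ia]
  simp only [sintegral]
  rw [← hab]; ring

lemma sintegral_sub (σ τ : SignedMeasure (Sp N)) {f : Sp N → ℝ} (hf : Continuous f) :
    sintegral (σ - τ) f = sintegral σ f - sintegral τ f := by
  rw [sub_eq_add_neg, ← neg_one_smul ℝ τ, sintegral_add _ _ hf, sintegral_smul _ _ hf]
  ring

lemma sintegral_dirac (x : Sp N) {f : Sp N → ℝ} (hf : Continuous f) :
    sintegral ((Measure.dirac x).toSignedMeasure) f = f x := by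
  rw [sintegral_eq_sub _ (Measure.dirac x) 0 (by simp) hf]
  simp [integral_dirac]

lemma sintegral_finsetsum {ι : Type*} (s : Finset ι) (F : ι → SignedMeasure (Sp N))
    {f : Sp N → ℝ} (hf : Continuous f) :
    sintegral (∑ i ∈ s, F i) f = ∑ i ∈ s, sintegral (F i) f := by
  classical
  induction s using Finset.induction_on with
  | empty => simpa using sintegral_zero hf
  | insert _ _ hnot ih =>
      rename_i a s
      rw [Finset.sum_insert hnot, Finset.sum_insert hnot, sintegral_add _ _ hf, ih]

lemma sintegral_fun_add (μ : SignedMeasure (Sp N)) {f g : Sp N → ℝ}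
    (hf : Continuous f) (hg : Continuous g) :
    sintegral μ (fun x => f x + g x) = sintegral μ f + sintegral μ g := by
  simp only [sintegral]
  rw [integral_add (integrable_cont _ hf) (integrable_cont _ hg),
    integral_add (integrable_cont _ hf) (integrable_cont _ hg)]
  ring

-- FinitelySupported closure
lemma FS_zero {α : Type*} [MeasurableSpace α] :
    FinitelySupported (0 : SignedMeasure α) :=
  ⟨0, fun i => i.elim0, fun i => i.elim0, by simp⟩

lemma FS_dirac {α : Type*} [MeasurableSpace α] (x : α) :
    FinitelySupported ((Measure.dirac x).toSignedMeasure) :=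
  ⟨1, fun _ => 1, fun _ => x, by simp⟩

lemma FS_smul {α : Type*} [MeasurableSpace α] {σ : SignedMeasure α}
    (h : FinitelySupported σ) (r : ℝ) : FinitelySupported (r • σ) := by
  obtain ⟨m, c, pts, rfl⟩ := h
  exact ⟨m, fun k => r * c k, pts, by rw [Finset.smul_sum]; simp [smul_smul]⟩

lemma FS_add {α : Type*} [MeasurableSpace α] {σ τ : SignedMeasure α}
    (hσ : FinitelySupported σ) (hτ : FinitelySupported τ) :
    FinitelySupported (σ + τ) := by
  obtain ⟨m1, c1, p1, rfl⟩ := hσ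
  obtain ⟨m2, c2, p2, rfl⟩ := hτ
  refine ⟨m1 + m2, Fin.append c1 c2, Fin.append p1 p2, ?_⟩
  rw [Fin.sum_univ_add]
  simp [Fin.append_left, Fin.append_right]

lemma FS_sub {α : Type*} [MeasurableSpace α] {σ τ : SignedMeasure α}
    (hσ : FinitelySupported σ) (hτ : FinitelySupported τ) :
    FinitelySupported (σ - τ) := by
  rw [sub_eq_add_neg, ← neg_one_smul ℝ τ]
  exact FS_add hσ (FS_smul hτ (-1))

lemma FS_sum {α : Type*} [MeasurableSpace α] {ι : Type*} (s : Finset ι)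
    (F : ι → SignedMeasure α) (h : ∀ i ∈ s, FinitelySupported (F i)) :
    FinitelySupported (∑ i ∈ s, F i) := by
  classical
  induction s using Finset.induction_on with
  | empty => simpa using FS_zero
  | insert _ _ hnot ih =>
      rename_i a s
      rw [Finset.sum_insert hnot]
      exact FS_add (h a (Finset.mem_insert_self a s))
        (ih fun i hi => h i (Finset.mem_insert_of_mem hi))

-- parts of a cover
def parts {X : Type*} {m : ℕ} (B : Fin m → Set X) (i : Fin m) : Set X :=
  B i \ ⋃ j, ⋃ (_ : j < i), B j

lemma parts_subset {X : Type*} {m : ℕ} (B : Fin m → Set X) (i : Fin m) :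
    parts B i ⊆ B i := Set.diff_subset

lemma parts_measurable {α : Type*} [MeasurableSpace α] {m : ℕ} (B : Fin m → Set α)
    (hB : ∀ i, MeasurableSet (B i)) (i : Fin m) : MeasurableSet (parts B i) :=
  (hB i).diff (MeasurableSet.iUnion fun j => MeasurableSet.iUnion fun _ => hB j)

lemma parts_disjoint {X : Type*} {m : ℕ} (B : Fin m → Set X) :
    Pairwise (Function.onFun Disjoint (parts B)) := by
  intro i j hij
  rw [Function.onFun, Set.disjoint_left]
  rintro x ⟨hxi, hni⟩ ⟨hxj, hnj⟩
  rcases hij.lt_or_gt with h | h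
  · exact hnj (Set.mem_iUnion.2 ⟨i, Set.mem_iUnion.2 ⟨h, hxi⟩⟩)
  · exact hni (Set.mem_iUnion.2 ⟨j, Set.mem_iUnion.2 ⟨h, hxj⟩⟩)

lemma parts_cover {X : Type*} {m : ℕ} (B : Fin m → Set X)
    (h : ∀ x, ∃ i, x ∈ B i) : ⋃ i, parts B i = Set.univ := by
  ext x
  simp only [Set.mem_iUnion, Set.mem_univ, iff_true]
  classical
  obtain ⟨i, hi⟩ := h x
  let s : Finset (Fin m) := Finset.univ.filter (fun i => x ∈ B i)
  have hs : s.Nonempty := ⟨i, by simp [s, hi]⟩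
  refine ⟨s.min' hs, ?_, ?_⟩
  · have := s.min'_mem hs
    simpa [s] using this
  · intro hmem
    rw [Set.mem_iUnion] at hmem
    obtain ⟨j, hj⟩ := hmem
    rw [Set.mem_iUnion] at hj
    obtain ⟨hlt, hxj⟩ := hj
    exact absurd (s.min'_le j (by simp [s, hxj])) (not_le.2 hlt)

-- net existence
lemma net_exists (δ : ℝ) (hδ : 0 < δ) :
    ∃ (m : ℕ) (v : Fin m → Sp N), ∀ x : Sp N, ∃ i, dist x (v i) < δ := by
  obtain ⟨t, ht⟩ := (isCompact_univ (X := Sp N)).elim_finite_subcover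
    (fun v : Sp N => Metric.ball v δ) (fun _ => Metric.isOpen_ball)
    (fun x _ => Set.mem_iUnion.2 ⟨x, Metric.mem_ball_self hδ⟩)
  refine ⟨t.card, fun i => (t.equivFin.symm i : Sp N), fun x => ?_⟩
  obtain ⟨v₀, hv₀⟩ := Set.mem_iUnion.1 (ht (Set.mem_univ x))
  rw [Set.mem_iUnion] at hv₀
  obtain ⟨hv₀t, hxball⟩ := hv₀
  refine ⟨t.equivFin ⟨v₀, hv₀t⟩, ?_⟩
  have he : (t.equivFin.symm (t.equivFin ⟨v₀, hv₀t⟩) : Sp N) = v₀ := by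
    rw [Equiv.symm_apply_apply]
  simp only [he]
  exact Metric.mem_ball.1 hxball

-- Riemann sum lemma
lemma riemann {V : Type*} [NormedAddCommGroup V] [NormedSpace ℝ V] [CompleteSpace V]
    (P : Measure (Sp N)) [IsFiniteMeasure P] {m : ℕ} (A : Fin m → Set (Sp N))
    (hmeas : ∀ i, MeasurableSet (A i))
    (hdisj : Pairwise (Function.onFun Disjoint A))
    (hcover : ⋃ i, A i = Set.univ)
    (v : Fin m → Sp N) {f : Sp N → V} (hf : Continuous f)
    {ε : ℝ} (hε : 0 ≤ ε) (happ : ∀ i, ∀ x ∈ A i, ‖f (v i) - f x‖ ≤ ε) :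
    ‖(∑ i, (P (A i)).toReal • f (v i)) - ∫ x, f x ∂P‖ ≤ ε * (P Set.univ).toReal := by
  have hint : ∫ x, f x ∂P = ∑ i, ∫ x in A i, f x ∂P := by
    rw [← setIntegral_univ, ← hcover]
    exact integral_iUnion_fintype hmeas hdisj
      (fun i => (integrable_cont P hf).integrableOn)
  have hsum : ∑ i, (P (A i)).toReal = (P Set.univ).toReal := by
    rw [← hcover, measure_iUnion hdisj hmeas, tsum_fintype, ENNReal.toReal_sum]
    intro i _
    exact measure_ne_top _ _
  rw [hint, ← Finset.sum_sub_distrib]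
  refine (norm_sum_le _ _).trans ?_
  rw [← hsum, Finset.mul_sum]
  refine Finset.sum_le_sum fun i _ => ?_
  have hconst : (P (A i)).toReal • f (v i) = ∫ _ in A i, f (v i) ∂P := by
    rw [setIntegral_const]; rfl
  rw [hconst, ← integral_sub (integrableOn_const (measure_ne_top P (A i)) enorm_ne_top).integrable
    ((integrable_cont P hf).integrableOn)]
  exact norm_setIntegral_le_of_norm_le_const (measure_lt_top _ _)
    (fun x hx => happ i x hx)

-- suppFn facts
variable {K : Set (EuclideanSpace ℝ (Fin N))}

lemma suppFn_ge (hK : IsCompact K) {y : EuclideanSpace ℝ (Fin N)} (hy : y ∈ K)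
    (x : EuclideanSpace ℝ (Fin N)) : ⟪x, y⟫ ≤ suppFn K x := by
  refine le_csSup ?_ (Set.mem_image_of_mem _ hy)
  exact (hK.image (Continuous.inner continuous_const continuous_id)).bddAbove

lemma suppFn_le (hne : K.Nonempty) {x : EuclideanSpace ℝ (Fin N)} {C : ℝ}
    (h : ∀ y ∈ K, ⟪x, y⟫ ≤ C) : suppFn K x ≤ C := by
  refine csSup_le (hne.image _) ?_
  rintro _ ⟨y, hy, rfl⟩
  exact h y hy

lemma suppFn_cont (hK : IsCompact K) (hne : K.Nonempty) : Continuous (suppFn K) := by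
  obtain ⟨y₁, hy₁, hmax'⟩ := hK.exists_isMaxOn hne continuous_norm.continuousOn
  have hmax : ∀ y ∈ K, ‖y‖ ≤ ‖y₁‖ := fun y hy => isMaxOn_iff.mp hmax' y hy
  set R₀ := ‖y₁‖ with hR₀def
  have hR₀0 : 0 ≤ R₀ := norm_nonneg _
  have key : ∀ x x', suppFn K x - suppFn K x' ≤ R₀ * ‖x - x'‖ := by
    intro x x'
    rw [sub_le_iff_le_add]
    refine suppFn_le hne fun y hy => ?_
    have h1 : ⟪x', y⟫ ≤ suppFn K x' := suppFn_ge hK hy x'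
    have h2 : ⟪x - x', y⟫ ≤ ‖x - x'‖ * ‖y‖ := real_inner_le_norm _ _
    have h3 : ⟪x - x', y⟫ = ⟪x, y⟫ - ⟪x', y⟫ := inner_sub_left _ _ _
    have h4 : ‖y‖ ≤ R₀ := hmax y hy
    nlinarith [norm_nonneg (x - x')]
  have : LipschitzWith (Real.toNNReal R₀) (suppFn K) := by
    refine LipschitzWith.of_dist_le_mul fun x x' => ?_
    rw [Real.dist_eq, dist_eq_norm, Real.coe_toNNReal _ hR₀0, abs_sub_le_iff]
    exact ⟨key x x', by rw [norm_sub_rev]; exact key x' x⟩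
  exact this.continuous

-- negation on sphere
def negS (x : Sp N) : Sp N :=
  ⟨-(x : EuclideanSpace ℝ (Fin N)), by
    rw [Metric.mem_sphere, dist_zero_right, norm_neg, ← dist_zero_right, ← Metric.mem_sphere]
    exact x.2⟩

lemma negS_val (x : Sp N) :
    (negS x : EuclideanSpace ℝ (Fin N)) = -(x : EuclideanSpace ℝ (Fin N)) := rfl

lemma norm_coe_sphere (x : Sp N) : ‖(x : EuclideanSpace ℝ (Fin N))‖ = 1 :=
  mem_sphere_zero_iff_norm.1 x.2

variable {s y₀ : EuclideanSpace ℝ (Fin N)}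

lemma g_nonneg (hKc : IsCompact K) (hs : s ∈ K) (x : Sp N) :
    0 ≤ suppFn K (x : EuclideanSpace ℝ (Fin N)) - ⟪(x : EuclideanSpace ℝ (Fin N)), s⟫ := by
  have h1 := suppFn_ge hKc hs (x : EuclideanSpace ℝ (Fin N))
  linarith

lemma g_le (hKc : IsCompact K) (hs : s ∈ K)
    (hy₀max : ∀ y ∈ K, ‖y - s‖ ≤ ‖y₀ - s‖) (x : Sp N) :
    suppFn K (x : EuclideanSpace ℝ (Fin N)) - ⟪(x : EuclideanSpace ℝ (Fin N)), s⟫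
      ≤ ‖y₀ - s‖ := by
  rw [sub_le_iff_le_add]
  refine suppFn_le ⟨s, hs⟩ fun y hy => ?_
  have h3 : ⟪(x : EuclideanSpace ℝ (Fin N)), y - s⟫
      ≤ ‖(x : EuclideanSpace ℝ (Fin N))‖ * ‖y - s‖ := real_inner_le_norm _ _
  rw [norm_coe_sphere x, one_mul] at h3
  have h4 := hy₀max y hy
  have h5 : ⟪(x : EuclideanSpace ℝ (Fin N)), y - s⟫
      = ⟪(x : EuclideanSpace ℝ (Fin N)), y⟫ - ⟪(x : EuclideanSpace ℝ (Fin N)), s⟫ :=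
    inner_sub_right _ _ _
  linarith

lemma g_lip_one (hKc : IsCompact K) (hs : s ∈ K)
    (hy₀max : ∀ y ∈ K, ‖y - s‖ ≤ ‖y₀ - s‖) (x x' : Sp N) :
    (suppFn K (x : EuclideanSpace ℝ (Fin N)) - ⟪(x : EuclideanSpace ℝ (Fin N)), s⟫)
      - (suppFn K (x' : EuclideanSpace ℝ (Fin N)) - ⟪(x' : EuclideanSpace ℝ (Fin N)), s⟫)
      ≤ ‖y₀ - s‖ * dist x x' := by
  have hkey : suppFn K (x : EuclideanSpace ℝ (Fin N))
      ≤ suppFn K (x' : EuclideanSpace ℝ (Fin N))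
        + (⟪(x : EuclideanSpace ℝ (Fin N)), s⟫ - ⟪(x' : EuclideanSpace ℝ (Fin N)), s⟫)
        + ‖y₀ - s‖ * dist x x' := by
    refine suppFn_le ⟨s, hs⟩ fun y hy => ?_
    have h1 : ⟪(x' : EuclideanSpace ℝ (Fin N)), y⟫
        ≤ suppFn K (x' : EuclideanSpace ℝ (Fin N)) := suppFn_ge hKc hy _
    have h2 : ⟪(x : EuclideanSpace ℝ (Fin N)) - (x' : EuclideanSpace ℝ (Fin N)), y - s⟫
        ≤ ‖(x : EuclideanSpace ℝ (Fin N)) - (x' : EuclideanSpace ℝ (Fin N))‖ * ‖y - s‖ :=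
      real_inner_le_norm _ _
    have h3 : ‖(x : EuclideanSpace ℝ (Fin N)) - (x' : EuclideanSpace ℝ (Fin N))‖
        = dist x x' := by rw [Subtype.dist_eq, dist_eq_norm]
    have h4 : ‖y - s‖ ≤ ‖y₀ - s‖ := hy₀max y hy
    have hexp : ⟪(x : EuclideanSpace ℝ (Fin N)) - (x' : EuclideanSpace ℝ (Fin N)), y - s⟫
        = ⟪(x : EuclideanSpace ℝ (Fin N)), y⟫ - ⟪(x' : EuclideanSpace ℝ (Fin N)), y⟫
          - ⟪(x : EuclideanSpace ℝ (Fin N)), s⟫ + ⟪(x' : EuclideanSpace ℝ (Fin N)), s⟫ := by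
      rw [inner_sub_left, inner_sub_right, inner_sub_right]
      ring
    rw [h3] at h2
    have h6 : dist x x' * ‖y - s‖ ≤ dist x x' * ‖y₀ - s‖ :=
      mul_le_mul_of_nonneg_left h4 dist_nonneg
    nlinarith
  linarith

lemma g_lip (hKc : IsCompact K) (hs : s ∈ K)
    (hy₀max : ∀ y ∈ K, ‖y - s‖ ≤ ‖y₀ - s‖) (x x' : Sp N) :
    |(suppFn K (x : EuclideanSpace ℝ (Fin N)) - ⟪(x : EuclideanSpace ℝ (Fin N)), s⟫)
      - (suppFn K (x' : EuclideanSpace ℝ (Fin N)) - ⟪(x' : EuclideanSpace ℝ (Fin N)), s⟫)|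
      ≤ ‖y₀ - s‖ * dist x x' := by
  rw [abs_sub_le_iff]
  constructor
  · exact g_lip_one hKc hs hy₀max x x'
  · rw [dist_comm]
    exact g_lip_one hKc hs hy₀max x' x

lemma g_lb (hKc : IsCompact K) (hy₀K : y₀ ∈ K) (x : Sp N) :
    ⟪(x : EuclideanSpace ℝ (Fin N)), y₀ - s⟫
      ≤ suppFn K (x : EuclideanSpace ℝ (Fin N)) - ⟪(x : EuclideanSpace ℝ (Fin N)), s⟫ := by
  have h1 := suppFn_ge hKc hy₀K (x : EuclideanSpace ℝ (Fin N))
  have h5 : ⟪(x : EuclideanSpace ℝ (Fin N)), y₀ - s⟫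
      = ⟪(x : EuclideanSpace ℝ (Fin N)), y₀⟫ - ⟪(x : EuclideanSpace ℝ (Fin N)), s⟫ :=
    inner_sub_right _ _ _
  linarith

lemma inner_ge_of_close (x y : Sp N) (h : dist x y < 1/2) :
    (7:ℝ)/8 ≤ ⟪(x : EuclideanSpace ℝ (Fin N)), (y : EuclideanSpace ℝ (Fin N))⟫ := by
  have h1 := norm_coe_sphere x
  have h2 := norm_coe_sphere y
  have h3 : ‖(x : EuclideanSpace ℝ (Fin N)) - (y : EuclideanSpace ℝ (Fin N))‖ < 1/2 := by
    rw [← dist_eq_norm, ← Subtype.dist_eq]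
    exact h
  have h4 := norm_sub_sq_real (x : EuclideanSpace ℝ (Fin N)) (y : EuclideanSpace ℝ (Fin N))
  nlinarith [norm_nonneg ((x : EuclideanSpace ℝ (Fin N)) - (y : EuclideanSpace ℝ (Fin N)))]

lemma riemann_signed (μ : SignedMeasure (Sp N)) {m : ℕ} (A : Fin m → Set (Sp N))
    (hmeas : ∀ i, MeasurableSet (A i))
    (hdisj : Pairwise (Function.onFun Disjoint A))
    (hcover : ⋃ i, A i = Set.univ)
    (v : Fin m → Sp N) {F : Sp N → ℝ} (hF : Continuous F)
    {ε : ℝ} (hε : 0 ≤ ε) (happ : ∀ i, ∀ x ∈ A i, |F (v i) - F x| ≤ ε) :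
    |(∑ i, ((μ.toJordanDecomposition.posPart (A i)).toReal
        - (μ.toJordanDecomposition.negPart (A i)).toReal) * F (v i)) - sintegral μ F|
      ≤ ε * ((μ.toJordanDecomposition.posPart Set.univ).toReal
        + (μ.toJordanDecomposition.negPart Set.univ).toReal) := by
  set pos := μ.toJordanDecomposition.posPart
  set neg := μ.toJordanDecomposition.negPart
  have happ' : ∀ i, ∀ x ∈ A i, ‖F (v i) - F x‖ ≤ ε := by
    intro i x hx; rw [Real.norm_eq_abs]; exact happ i x hx
  have ep := riemann pos A hmeas hdisj hcover v hF hε happ'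
  have en := riemann neg A hmeas hdisj hcover v hF hε happ'
  rw [Real.norm_eq_abs] at ep en
  have hw : (∑ i, ((pos (A i)).toReal - (neg (A i)).toReal) * F (v i)) =
      (∑ i, (pos (A i)).toReal • F (v i)) - (∑ i, (neg (A i)).toReal • F (v i)) := by
    rw [← Finset.sum_sub_distrib]
    exact Finset.sum_congr rfl fun i _ => by simp only [smul_eq_mul]; ring
  have hsint : sintegral μ F = (∫ x, F x ∂pos) - (∫ x, F x ∂neg) := rfl
  rw [hw, hsint]
  have habs : |((∑ i, (pos (A i)).toReal • F (v i)) - (∑ i, (neg (A i)).toReal • F (v i)))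
      - ((∫ x, F x ∂pos) - (∫ x, F x ∂neg))|
      ≤ |(∑ i, (pos (A i)).toReal • F (v i)) - ∫ x, F x ∂pos|
      + |(∑ i, (neg (A i)).toReal • F (v i)) - ∫ x, F x ∂neg| := by
    rw [show ((∑ i, (pos (A i)).toReal • F (v i)) - (∑ i, (neg (A i)).toReal • F (v i)))
      - ((∫ x, F x ∂pos) - (∫ x, F x ∂neg))
      = ((∑ i, (pos (A i)).toReal • F (v i)) - ∫ x, F x ∂pos)
      - ((∑ i, (neg (A i)).toReal • F (v i)) - ∫ x, F x ∂neg) from by ring]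
    exact abs_sub _ _
  have : ε * ((pos Set.univ).toReal + (neg Set.univ).toReal)
      = ε * (pos Set.univ).toReal + ε * (neg Set.univ).toReal := by ring
  rw [this]
  linarith

lemma bary_defect (μ : SignedMeasure (Sp N)) {m : ℕ} (A : Fin m → Set (Sp N))
    (hmeas : ∀ i, MeasurableSet (A i))
    (hdisj : Pairwise (Function.onFun Disjoint A))
    (hcover : ⋃ i, A i = Set.univ)
    (v : Fin m → Sp N) {δ : ℝ} (hδ : 0 ≤ δ)
    (hAsub : ∀ i, ∀ x ∈ A i, dist x (v i) ≤ δ) :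
    ‖(∑ i, ((μ.toJordanDecomposition.posPart (A i)).toReal
        - (μ.toJordanDecomposition.negPart (A i)).toReal)
          • ((v i : Sp N) : EuclideanSpace ℝ (Fin N)))
      - ((∫ x : Sp N, (x : EuclideanSpace ℝ (Fin N)) ∂μ.toJordanDecomposition.posPart)
        - ∫ x : Sp N, (x : EuclideanSpace ℝ (Fin N)) ∂μ.toJordanDecomposition.negPart)‖
      ≤ δ * ((μ.toJordanDecomposition.posPart Set.univ).toReal
        + (μ.toJordanDecomposition.negPart Set.univ).toReal) := by
  set pos := μ.toJordanDecomposition.posPart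
  set neg := μ.toJordanDecomposition.negPart
  have happ' : ∀ i, ∀ x ∈ A i,
      ‖((v i : Sp N) : EuclideanSpace ℝ (Fin N)) - (x : EuclideanSpace ℝ (Fin N))‖ ≤ δ := by
    intro i x hx
    rw [← dist_eq_norm, ← Subtype.dist_eq, dist_comm]
    exact hAsub i x hx
  have hcont : Continuous fun x : Sp N => (x : EuclideanSpace ℝ (Fin N)) :=
    continuous_subtype_val
  have ep := riemann pos A hmeas hdisj hcover v hcont hδ happ'
  have en := riemann neg A hmeas hdisj hcover v hcont hδ happ'
  have hw : (∑ i, ((pos (A i)).toReal - (neg (A i)).toReal)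
        • ((v i : Sp N) : EuclideanSpace ℝ (Fin N))) =
      (∑ i, (pos (A i)).toReal • ((v i : Sp N) : EuclideanSpace ℝ (Fin N)))
      - (∑ i, (neg (A i)).toReal • ((v i : Sp N) : EuclideanSpace ℝ (Fin N))) := by
    rw [← Finset.sum_sub_distrib]
    exact Finset.sum_congr rfl fun i _ => by rw [sub_smul]
  rw [hw]
  have hsplit : (∑ i, (pos (A i)).toReal • ((v i : Sp N) : EuclideanSpace ℝ (Fin N)))
      - (∑ i, (neg (A i)).toReal • ((v i : Sp N) : EuclideanSpace ℝ (Fin N)))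
      - ((∫ x : Sp N, (x : EuclideanSpace ℝ (Fin N)) ∂pos)
        - ∫ x : Sp N, (x : EuclideanSpace ℝ (Fin N)) ∂neg)
      = ((∑ i, (pos (A i)).toReal • ((v i : Sp N) : EuclideanSpace ℝ (Fin N)))
          - ∫ x : Sp N, (x : EuclideanSpace ℝ (Fin N)) ∂pos)
        - ((∑ i, (neg (A i)).toReal • ((v i : Sp N) : EuclideanSpace ℝ (Fin N)))
          - ∫ x : Sp N, (x : EuclideanSpace ℝ (Fin N)) ∂neg) := by abel
  rw [hsplit]
  calc ‖_ - _‖ ≤ _ + _ := norm_sub_le _ _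
    _ ≤ δ * (pos Set.univ).toReal + δ * (neg Set.univ).toReal := add_le_add ep en
    _ = δ * ((pos Set.univ).toReal + (neg Set.univ).toReal) := by ring



variable {N : ℕ}

/-- Abstract positivity computation. -/
lemma posit_abstract (μ : SignedMeasure (Sp N)) {m p : ℕ}
    (A : Fin m → Set (Sp N))
    (hmeas : ∀ i, MeasurableSet (A i))
    (hdisj : Pairwise (Function.onFun Disjoint A))
    (hcover : ⋃ i, A i = Set.univ)
    (v : Fin m → Sp N) {δ : ℝ} (hδpos : 0 < δ)
    (hAsub : ∀ i, ∀ x ∈ A i, dist x (v i) ≤ δ)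
    (u : Fin p → Sp N) (hu : ∀ x : Sp N, ∃ j, dist x (u j) < 1/2)
    (M : ℝ) (hM : M = (μ.toJordanDecomposition.posPart Set.univ).toReal
      + (μ.toJordanDecomposition.negPart Set.univ).toReal)
    (bvec : EuclideanSpace ℝ (Fin N))
    (hbvec : bvec = (∑ i, ((μ.toJordanDecomposition.posPart (A i)).toReal
        - (μ.toJordanDecomposition.negPart (A i)).toReal)
          • ((v i : Sp N) : EuclideanSpace ℝ (Fin N)))
      - ((∫ x : Sp N, (x : EuclideanSpace ℝ (Fin N)) ∂μ.toJordanDecomposition.posPart)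
        - ∫ x : Sp N, (x : EuclideanSpace ℝ (Fin N)) ∂μ.toJordanDecomposition.negPart))
    (hb : ‖bvec‖ ≤ δ * M)
    (bd : Sp N) (hbd : ‖bvec‖ • (bd : EuclideanSpace ℝ (Fin N)) = -bvec)
    (c : ℝ) (hc : c = 3 * δ * M)
    (F lin g : Sp N → ℝ) (hlincont : Continuous lin) (hgcont : Continuous g)
    (hsplit : ∀ x, F x = lin x + g x)
    (s : EuclideanSpace ℝ (Fin N))
    (hlin : lin = fun x : Sp N => ⟪(x : EuclideanSpace ℝ (Fin N)), s⟫)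
    (R : ℝ) (hR0 : 0 ≤ R)
    (yd : EuclideanSpace ℝ (Fin N)) (hyd : ‖yd‖ = R)
    (hg0 : ∀ x : Sp N, 0 ≤ g x)
    (hgle : ∀ x : Sp N, g x ≤ R)
    (hglip : ∀ x x' : Sp N, |g x - g x'| ≤ R * dist x x')
    (hglb : ∀ x : Sp N, ⟪(x : EuclideanSpace ℝ (Fin N)), yd⟫ ≤ g x)
    (hμF : 0 ≤ sintegral μ F) :
    0 ≤ (∑ i, ((μ.toJordanDecomposition.posPart (A i)).toReal
          - (μ.toJordanDecomposition.negPart (A i)).toReal) * F (v i))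
        + (‖bvec‖/2 * F bd - ‖bvec‖/2 * F (negS bd))
        + (∑ j, (c * F (u j) + c * F (negS (u j)))) := by
  have hM0 : 0 ≤ M := by rw [hM]; positivity
  have hc0 : 0 ≤ c := by rw [hc]; positivity
  have hFcont : Continuous F := by
    have : F = fun x => lin x + g x := funext hsplit
    rw [this]; exact hlincont.add hgcont
  -- split sums
  have e1 : (∑ i, ((μ.toJordanDecomposition.posPart (A i)).toReal
        - (μ.toJordanDecomposition.negPart (A i)).toReal) * F (v i))
      = (∑ i, ((μ.toJordanDecomposition.posPart (A i)).toReal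
          - (μ.toJordanDecomposition.negPart (A i)).toReal) * lin (v i))
      + (∑ i, ((μ.toJordanDecomposition.posPart (A i)).toReal
          - (μ.toJordanDecomposition.negPart (A i)).toReal) * g (v i)) := by
    rw [← Finset.sum_add_distrib]
    exact Finset.sum_congr rfl fun i _ => by rw [hsplit]; ring
  have e2 : ‖bvec‖/2 * F bd - ‖bvec‖/2 * F (negS bd)
      = (‖bvec‖/2 * lin bd - ‖bvec‖/2 * lin (negS bd))
        + (‖bvec‖/2 * g bd - ‖bvec‖/2 * g (negS bd)) := by
    rw [hsplit bd, hsplit (negS bd)]; ring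
  have e3 : (∑ j, (c * F (u j) + c * F (negS (u j))))
      = (∑ j, (c * lin (u j) + c * lin (negS (u j))))
        + (∑ j, (c * g (u j) + c * g (negS (u j)))) := by
    rw [← Finset.sum_add_distrib]
    exact Finset.sum_congr rfl fun j _ => by rw [hsplit, hsplit]; ring
  -- linear part
  have hL1 : (∑ i, ((μ.toJordanDecomposition.posPart (A i)).toReal
        - (μ.toJordanDecomposition.negPart (A i)).toReal) * lin (v i))
      = ⟪∑ i, ((μ.toJordanDecomposition.posPart (A i)).toReal
          - (μ.toJordanDecomposition.negPart (A i)).toReal)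
            • ((v i : Sp N) : EuclideanSpace ℝ (Fin N)), s⟫ := by
    rw [sum_inner]
    refine Finset.sum_congr rfl fun i _ => ?_
    rw [real_inner_smul_left, hlin]
  have hL2 : ‖bvec‖/2 * lin bd - ‖bvec‖/2 * lin (negS bd) = ⟪-bvec, s⟫ := by
    have h1 : lin (negS bd) = -lin bd := by
      rw [hlin]; simp only [negS_val]; rw [inner_neg_left]
    rw [h1, ← hbd, hlin, real_inner_smul_left]
    ring
  have hL3 : (∑ j, (c * lin (u j) + c * lin (negS (u j)))) = 0 := by
    refine Finset.sum_eq_zero fun j _ => ?_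
    have h1 : lin (negS (u j)) = -lin (u j) := by
      rw [hlin]; simp only [negS_val]; rw [inner_neg_left]
    rw [h1]; ring
  have hLtot : (∑ i, ((μ.toJordanDecomposition.posPart (A i)).toReal
        - (μ.toJordanDecomposition.negPart (A i)).toReal) * lin (v i))
      + (‖bvec‖/2 * lin bd - ‖bvec‖/2 * lin (negS bd))
      + (∑ j, (c * lin (u j) + c * lin (negS (u j)))) = sintegral μ lin := by
    rw [hL1, hL2, hL3, add_zero, ← inner_add_left]
    have hsum : (∑ i, ((μ.toJordanDecomposition.posPart (A i)).toReal
        - (μ.toJordanDecomposition.negPart (A i)).toReal)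
          • ((v i : Sp N) : EuclideanSpace ℝ (Fin N))) + -bvec
        = (∫ x : Sp N, (x : EuclideanSpace ℝ (Fin N)) ∂μ.toJordanDecomposition.posPart)
          - ∫ x : Sp N, (x : EuclideanSpace ℝ (Fin N)) ∂μ.toJordanDecomposition.negPart := by
      rw [hbvec]; abel
    rw [hsum]
    have hIp : ⟪(∫ x : Sp N, (x : EuclideanSpace ℝ (Fin N))
        ∂μ.toJordanDecomposition.posPart), s⟫
        = ∫ x : Sp N, ⟪(x : EuclideanSpace ℝ (Fin N)), s⟫
            ∂μ.toJordanDecomposition.posPart := by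
      rw [real_inner_comm, ← integral_inner
        (integrable_cont μ.toJordanDecomposition.posPart continuous_subtype_val)]
      simp_rw [real_inner_comm]
    have hIn : ⟪(∫ x : Sp N, (x : EuclideanSpace ℝ (Fin N))
        ∂μ.toJordanDecomposition.negPart), s⟫
        = ∫ x : Sp N, ⟪(x : EuclideanSpace ℝ (Fin N)), s⟫
            ∂μ.toJordanDecomposition.negPart := by
      rw [real_inner_comm, ← integral_inner
        (integrable_cont μ.toJordanDecomposition.negPart continuous_subtype_val)]
      simp_rw [real_inner_comm]
    rw [inner_sub_left, hIp, hIn, hlin]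
    rfl
  -- g part
  have hG1 : |(∑ i, ((μ.toJordanDecomposition.posPart (A i)).toReal
        - (μ.toJordanDecomposition.negPart (A i)).toReal) * g (v i))
      - sintegral μ g| ≤ R * δ * M := by
    have h := riemann_signed μ A hmeas hdisj hcover v hgcont
      (mul_nonneg hR0 hδpos.le) (fun i x hx => ?_)
    · rw [← hM] at h; exact h
    · have h1 := hglip (v i) x
      have hd : dist (v i) x ≤ δ := by rw [dist_comm]; exact hAsub i x hx
      have h2 : R * dist (v i) x ≤ R * δ := mul_le_mul_of_nonneg_left hd hR0
      linarith
  have hG2 : -(δ * M / 2 * R) ≤ ‖bvec‖/2 * g bd - ‖bvec‖/2 * g (negS bd) := by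
    have h1 := hg0 bd
    have h2 := hgle (negS bd)
    have h3 := hg0 (negS bd)
    have h4 : (0:ℝ) ≤ ‖bvec‖ := norm_nonneg _
    have h5 : ‖bvec‖/2 * g (negS bd) ≤ δ * M / 2 * R := by
      refine mul_le_mul (by linarith) h2 h3 ?_
      have hδM : 0 ≤ δ * M := le_trans h4 hb
      linarith
    have h6 : 0 ≤ ‖bvec‖/2 * g bd := mul_nonneg (by linarith) h1
    linarith
  have hG3 : c * (3/4 * R) ≤ ∑ j, (c * g (u j) + c * g (negS (u j))) := by
    rcases eq_or_lt_of_le hR0 with h0 | hRpos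
    · calc c * (3/4 * R) = 0 := by rw [← h0]; ring
        _ ≤ _ := Finset.sum_nonneg fun j _ =>
            add_nonneg (mul_nonneg hc0 (hg0 _)) (mul_nonneg hc0 (hg0 _))
    · have hydn : ‖R⁻¹ • yd‖ = 1 := by
        rw [norm_smul, Real.norm_eq_abs, abs_of_pos (inv_pos.2 hRpos), hyd]
        exact inv_mul_cancel₀ (ne_of_gt hRpos)
      set d : Sp N := ⟨R⁻¹ • yd, by rw [mem_sphere_zero_iff_norm]; exact hydn⟩ with hddef
      obtain ⟨j₀, hj₀⟩ := hu d
      have hrd : yd = R • (d : EuclideanSpace ℝ (Fin N)) := by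
        show yd = R • (R⁻¹ • yd)
        rw [smul_smul, mul_inv_cancel₀ (ne_of_gt hRpos), one_smul]
      have hinner : 7/8 * R ≤ ⟪((u j₀ : Sp N) : EuclideanSpace ℝ (Fin N)), yd⟫ := by
        have h5 := inner_ge_of_close (u j₀) d (by rw [dist_comm]; exact hj₀)
        rw [hrd, real_inner_smul_right]
        have h6 := mul_le_mul_of_nonneg_left h5 hRpos.le
        linarith
      have hterm : c * (3/4 * R) ≤ c * g (u j₀) + c * g (negS (u j₀)) := by
        have h1 := hglb (u j₀)
        have h2 := hg0 (negS (u j₀))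
        have h3 : 3/4 * R ≤ g (u j₀) := by linarith
        have h4 := mul_le_mul_of_nonneg_left h3 hc0
        have h5 : 0 ≤ c * g (negS (u j₀)) := mul_nonneg hc0 h2
        linarith
      refine hterm.trans (Finset.single_le_sum
        (f := fun j => c * g (u j) + c * g (negS (u j)))
        (fun j _ => add_nonneg (mul_nonneg hc0 (hg0 _)) (mul_nonneg hc0 (hg0 _)))
        (Finset.mem_univ j₀))
  have hFsum : sintegral μ F = sintegral μ lin + sintegral μ g := by
    have hFe : F = fun x => lin x + g x := funext hsplit
    rw [hFe, sintegral_fun_add μ hlincont hgcont]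
  have habs1 : sintegral μ g - R * δ * M
      ≤ (∑ i, ((μ.toJordanDecomposition.posPart (A i)).toReal
        - (μ.toJordanDecomposition.negPart (A i)).toReal) * g (v i)) := by
    have h := (abs_le.mp hG1).1
    linarith
  rw [e1, e2, e3]
  have hc34 : c * (3/4 * R) = 9/4 * (δ * M * R) := by rw [hc]; ring
  have p1 : R * δ * M = δ * M * R := by ring
  have p2 : δ * M / 2 * R = 1/2 * (δ * M * R) := by ring
  have hG2' : -(1/2 * (δ * M * R)) ≤ ‖bvec‖/2 * g bd - ‖bvec‖/2 * g (negS bd) := by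
    rw [← p2]; exact hG2
  have hδMR : 0 ≤ δ * M * R := by positivity
  linarith

/-- Abstract convergence computation. -/
lemma conv_abstract (μ : SignedMeasure (Sp N)) {m p : ℕ}
    (A : Fin m → Set (Sp N))
    (hmeas : ∀ i, MeasurableSet (A i))
    (hdisj : Pairwise (Function.onFun Disjoint A))
    (hcover : ⋃ i, A i = Set.univ)
    (v : Fin m → Sp N) {δ : ℝ} (hδpos : 0 < δ)
    (hAsub : ∀ i, ∀ x ∈ A i, dist x (v i) < δ)
    (u : Fin p → Sp N)
    (M : ℝ) (hM : M = (μ.toJordanDecomposition.posPart Set.univ).toReal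
      + (μ.toJordanDecomposition.negPart Set.univ).toReal)
    (bvec : EuclideanSpace ℝ (Fin N)) (hb : ‖bvec‖ ≤ δ * M)
    (bd : Sp N) (c : ℝ) (hc : c = 3 * δ * M)
    (f : Sp N → ℝ) (hf : Continuous f) (Cf : ℝ) (hCf0 : 0 ≤ Cf)
    (hfb : ∀ x, |f x| ≤ Cf) (ε : ℝ) (hε : 0 ≤ ε)
    (hmod : ∀ x y : Sp N, dist x y < δ → |f x - f y| ≤ ε) :
    |((∑ i, ((μ.toJordanDecomposition.posPart (A i)).toReal
          - (μ.toJordanDecomposition.negPart (A i)).toReal) * f (v i))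
        + (‖bvec‖/2 * f bd - ‖bvec‖/2 * f (negS bd))
        + (∑ j, (c * f (u j) + c * f (negS (u j))))) - sintegral μ f|
      ≤ ε * M + δ * (M * Cf) + δ * (6 * p * M * Cf) := by
  have hM0 : 0 ≤ M := by rw [hM]; positivity
  have hc0 : 0 ≤ c := by rw [hc]; positivity
  have hmain : |(∑ i, ((μ.toJordanDecomposition.posPart (A i)).toReal
        - (μ.toJordanDecomposition.negPart (A i)).toReal) * f (v i))
      - sintegral μ f| ≤ ε * M := by
    have h := riemann_signed μ A hmeas hdisj hcover v hf hε
      (fun i x hx => hmod (v i) x (by rw [dist_comm]; exact hAsub i x hx))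
    rw [← hM] at h; exact h
  have hbnn : (0:ℝ) ≤ ‖bvec‖ := norm_nonneg _
  have hmid : |‖bvec‖/2 * f bd - ‖bvec‖/2 * f (negS bd)| ≤ δ * (M * Cf) := by
    have e1 : |‖bvec‖/2 * f bd| ≤ δ * M / 2 * Cf := by
      rw [abs_mul, abs_of_nonneg (by linarith : (0:ℝ) ≤ ‖bvec‖/2)]
      exact mul_le_mul (by linarith) (hfb _) (abs_nonneg _) (by positivity)
    have e2 : |‖bvec‖/2 * f (negS bd)| ≤ δ * M / 2 * Cf := by
      rw [abs_mul, abs_of_nonneg (by linarith : (0:ℝ) ≤ ‖bvec‖/2)]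
      exact mul_le_mul (by linarith) (hfb _) (abs_nonneg _) (by positivity)
    calc |‖bvec‖/2 * f bd - ‖bvec‖/2 * f (negS bd)|
        ≤ |‖bvec‖/2 * f bd| + |‖bvec‖/2 * f (negS bd)| := abs_sub _ _
      _ ≤ δ * M / 2 * Cf + δ * M / 2 * Cf := add_le_add e1 e2
      _ = δ * (M * Cf) := by ring
  have hnu : |∑ j, (c * f (u j) + c * f (negS (u j)))| ≤ δ * (6 * p * M * Cf) := by
    have each : ∀ j, |c * f (u j) + c * f (negS (u j))| ≤ 2 * (c * Cf) := by
      intro j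
      have e1 : |c * f (u j)| ≤ c * Cf := by
        rw [abs_mul, abs_of_nonneg hc0]
        exact mul_le_mul_of_nonneg_left (hfb _) hc0
      have e2 : |c * f (negS (u j))| ≤ c * Cf := by
        rw [abs_mul, abs_of_nonneg hc0]
        exact mul_le_mul_of_nonneg_left (hfb _) hc0
      calc |c * f (u j) + c * f (negS (u j))|
          ≤ |c * f (u j)| + |c * f (negS (u j))| := abs_add_le _ _
        _ ≤ 2 * (c * Cf) := by linarith
    calc |∑ j, (c * f (u j) + c * f (negS (u j)))|
        ≤ ∑ j, |c * f (u j) + c * f (negS (u j))| := Finset.abs_sum_le_sum_abs _ _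
      _ ≤ ∑ _j : Fin p, 2 * (c * Cf) := Finset.sum_le_sum fun j _ => each j
      _ = p * (2 * (c * Cf)) := by
          rw [Finset.sum_const, Finset.card_univ, Fintype.card_fin, nsmul_eq_mul]
      _ = δ * (6 * p * M * Cf) := by rw [hc]; ring
  set X := (∑ i, ((μ.toJordanDecomposition.posPart (A i)).toReal
      - (μ.toJordanDecomposition.negPart (A i)).toReal) * f (v i)) with hX
  set Y := ‖bvec‖/2 * f bd - ‖bvec‖/2 * f (negS bd) with hY
  set Z := ∑ j, (c * f (u j) + c * f (negS (u j))) with hZ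
  have tri : |(X + Y + Z) - sintegral μ f|
      ≤ |X - sintegral μ f| + |Y| + |Z| := by
    have h1 : (X + Y + Z) - sintegral μ f
        = ((X - sintegral μ f) + Y) + Z := by ring
    rw [h1]
    calc |((X - sintegral μ f) + Y) + Z|
        ≤ |(X - sintegral μ f) + Y| + |Z| := abs_add_le _ _
      _ ≤ (|X - sintegral μ f| + |Y|) + |Z| := add_le_add_left (abs_add_le _ _) _
  linarith



variable {N : ℕ}

lemma exists_approx (hN : 1 ≤ N)
    (H : Set (Set (EuclideanSpace ℝ (Fin N))))
    (hne : ∀ K ∈ H, K.Nonempty)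
    (hcomp : ∀ K ∈ H, IsCompact K)
    (μ : SignedMeasure (Sp N))
    (hμ : ∀ K ∈ H, 0 ≤ sintegral μ
      (fun u => suppFn K (u : EuclideanSpace ℝ (Fin N))))
    {p : ℕ} (u : Fin p → Sp N) (hu : ∀ x : Sp N, ∃ j, dist x (u j) < 1/2)
    {δ : ℝ} (hδpos : 0 < δ)
    (M : ℝ) (hM : M = (μ.toJordanDecomposition.posPart Set.univ).toReal
      + (μ.toJordanDecomposition.negPart Set.univ).toReal) :
    ∃ σn : SignedMeasure (Sp N), FinitelySupported σn ∧
      (∀ K ∈ H, 0 ≤ sintegral σn (fun x => suppFn K (x : EuclideanSpace ℝ (Fin N)))) ∧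
      (∀ f : Sp N → ℝ, Continuous f → ∀ Cf : ℝ, 0 ≤ Cf → (∀ x, |f x| ≤ Cf) →
        ∀ ε : ℝ, 0 ≤ ε → (∀ x y : Sp N, dist x y < δ → |f x - f y| ≤ ε) →
        |sintegral σn f - sintegral μ f| ≤
          ε * M + δ * (M * Cf) + δ * (6 * p * M * Cf)) := by
  classical
  obtain ⟨m, v, hv⟩ := net_exists (N := N) δ hδpos
  set B : Fin m → Set (Sp N) := fun i => Metric.ball (v i) δ with hBdef
  set A : Fin m → Set (Sp N) := parts B with hAdef
  have hAmeas : ∀ i, MeasurableSet (A i) :=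
    parts_measurable B fun i => Metric.isOpen_ball.measurableSet
  have hAdisj : Pairwise (Function.onFun Disjoint A) := parts_disjoint B
  have hAcover : ⋃ i, A i = Set.univ :=
    parts_cover B fun x => by
      obtain ⟨i, hi⟩ := hv x
      exact ⟨i, Metric.mem_ball.2 hi⟩
  have hAsub : ∀ i, ∀ x ∈ A i, dist x (v i) < δ := fun i x hx =>
    Metric.mem_ball.1 (parts_subset B i hx)
  have hAsub' : ∀ i, ∀ x ∈ A i, dist x (v i) ≤ δ := fun i x hx => (hAsub i x hx).le
  have hM0 : 0 ≤ M := by rw [hM]; positivity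
  -- barycenter defect
  have hb' := bary_defect μ A hAmeas hAdisj hAcover v hδpos.le hAsub'
  rw [← hM] at hb'
  set bvec : EuclideanSpace ℝ (Fin N) :=
    (∑ i, ((μ.toJordanDecomposition.posPart (A i)).toReal
        - (μ.toJordanDecomposition.negPart (A i)).toReal)
          • ((v i : Sp N) : EuclideanSpace ℝ (Fin N)))
      - ((∫ x : Sp N, (x : EuclideanSpace ℝ (Fin N)) ∂μ.toJordanDecomposition.posPart)
        - ∫ x : Sp N, (x : EuclideanSpace ℝ (Fin N)) ∂μ.toJordanDecomposition.negPart)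
    with hbvecdef
  have e₀ : Sp N := ⟨EuclideanSpace.single ⟨0, hN⟩ 1, by
    rw [mem_sphere_zero_iff_norm, EuclideanSpace.norm_single]; norm_num⟩
  obtain ⟨bd, hbd⟩ : ∃ bd : Sp N,
      ‖bvec‖ • (bd : EuclideanSpace ℝ (Fin N)) = -bvec := by
    by_cases h : bvec = 0
    · exact ⟨e₀, by rw [h]; simp⟩
    · refine ⟨⟨‖bvec‖⁻¹ • (-bvec), ?_⟩, ?_⟩
      · rw [mem_sphere_zero_iff_norm, norm_smul, norm_neg, norm_inv, norm_norm]
        exact inv_mul_cancel₀ (norm_ne_zero_iff.2 h)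
      · show ‖bvec‖ • (‖bvec‖⁻¹ • (-bvec)) = -bvec
        rw [smul_smul, mul_inv_cancel₀ (norm_ne_zero_iff.2 h), one_smul]
  set c : ℝ := 3 * δ * M with hcdef
  set D : Sp N → SignedMeasure (Sp N) :=
    fun x => (Measure.dirac x).toSignedMeasure with hDdef
  set σ : SignedMeasure (Sp N) :=
    (∑ i, ((μ.toJordanDecomposition.posPart (A i)).toReal
        - (μ.toJordanDecomposition.negPart (A i)).toReal) • D (v i))
      + ((‖bvec‖/2) • D bd - (‖bvec‖/2) • D (negS bd))
      + (∑ j, (c • D (u j) + c • D (negS (u j)))) with hσdef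
  have hFS : FinitelySupported σ :=
    FS_add (FS_add (FS_sum _ _ fun i _ => FS_smul (FS_dirac _) _)
      (FS_sub (FS_smul (FS_dirac _) _) (FS_smul (FS_dirac _) _)))
      (FS_sum _ _ fun j _ => FS_add (FS_smul (FS_dirac _) _) (FS_smul (FS_dirac _) _))
  have hval : ∀ f : Sp N → ℝ, Continuous f → sintegral σ f =
      (∑ i, ((μ.toJordanDecomposition.posPart (A i)).toReal
          - (μ.toJordanDecomposition.negPart (A i)).toReal) * f (v i))
        + (‖bvec‖/2 * f bd - ‖bvec‖/2 * f (negS bd))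
        + (∑ j, (c * f (u j) + c * f (negS (u j)))) := by
    intro f hf
    rw [hσdef, sintegral_add _ _ hf, sintegral_add _ _ hf, sintegral_sub _ _ hf,
      sintegral_finsetsum _ _ hf, sintegral_finsetsum _ _ hf,
      sintegral_smul _ _ hf, sintegral_smul _ _ hf, sintegral_dirac _ hf,
      sintegral_dirac _ hf]
    congr 1
    · congr 1
      exact Finset.sum_congr rfl fun i _ => by
        rw [hDdef, sintegral_smul _ _ hf, sintegral_dirac _ hf]
    · exact Finset.sum_congr rfl fun j _ => by
        rw [hDdef, sintegral_add _ _ hf, sintegral_smul _ _ hf, sintegral_smul _ _ hf,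
          sintegral_dirac _ hf, sintegral_dirac _ hf]
  refine ⟨σ, hFS, ?_, ?_⟩
  · -- positivity
    intro K hK
    obtain ⟨s, hs⟩ := hne K hK
    have hKc := hcomp K hK
    obtain ⟨y₀, hy₀K, hy₀max'⟩ := hKc.exists_isMaxOn ⟨s, hs⟩
      ((continuous_id.sub continuous_const).norm.continuousOn)
    have hy₀max : ∀ y ∈ K, ‖y - s‖ ≤ ‖y₀ - s‖ := fun y hy => isMaxOn_iff.mp hy₀max' y hy
    have hscont := suppFn_cont hKc ⟨s, hs⟩
    have hFcont : Continuous (fun x : Sp N => suppFn K (x : EuclideanSpace ℝ (Fin N))) :=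
      hscont.comp continuous_subtype_val
    have hlincont : Continuous (fun x : Sp N => (⟪(x : EuclideanSpace ℝ (Fin N)), s⟫ : ℝ)) :=
      continuous_subtype_val.inner continuous_const
    have hgcont : Continuous (fun x : Sp N =>
        suppFn K (x : EuclideanSpace ℝ (Fin N)) - ⟪(x : EuclideanSpace ℝ (Fin N)), s⟫) :=
      hFcont.sub hlincont
    rw [hval _ hFcont]
    exact posit_abstract μ A hAmeas hAdisj hAcover v hδpos hAsub' u hu M hM
      bvec hbvecdef hb' bd hbd c hcdef
      (fun x : Sp N => suppFn K (x : EuclideanSpace ℝ (Fin N)))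
      (fun x : Sp N => ⟪(x : EuclideanSpace ℝ (Fin N)), s⟫)
      (fun x : Sp N => suppFn K (x : EuclideanSpace ℝ (Fin N))
        - ⟪(x : EuclideanSpace ℝ (Fin N)), s⟫)
      hlincont hgcont
      (fun x => by show suppFn K (x : EuclideanSpace ℝ (Fin N)) = _; ring)
      s rfl
      ‖y₀ - s‖ (norm_nonneg _) (y₀ - s) rfl
      (fun x => g_nonneg hKc hs x)
      (fun x => g_le hKc hs hy₀max x)
      (fun x x' => g_lip hKc hs hy₀max x x')
      (fun x => g_lb hKc hy₀K x)
      (hμ K hK)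
  · -- convergence
    intro f hf Cf hCf0 hfb ε hε hmod
    rw [hval f hf]
    exact conv_abstract μ A hAmeas hAdisj hAcover v hδpos hAsub u M hM
      bvec hb' bd c hcdef f hf Cf hCf0 hfb ε hε hmod


end ApproxAux

open ApproxAux in
/-- **Approximation Lemma.** -/
theorem approximation_lemma {N : ℕ} (hN : 1 ≤ N)
    (H : Set (Set (EuclideanSpace ℝ (Fin N))))
    (hne : ∀ K ∈ H, K.Nonempty)
    (hcomp : ∀ K ∈ H, IsCompact K)
    (hconv : ∀ K ∈ H, Convex ℝ K)
    (hadd : ∀ K ∈ H, ∀ L ∈ H, K + L ∈ H)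
    (hsmul : ∀ K ∈ H, ∀ α : ℝ, 0 ≤ α → α • K ∈ H)
    (μ : SignedMeasure (Metric.sphere (0 : EuclideanSpace ℝ (Fin N)) 1))
    (hμ : ∀ K ∈ H, 0 ≤ sintegral μ
      (fun u => suppFn K (u : EuclideanSpace ℝ (Fin N)))) :
    ∃ σ : ℕ → SignedMeasure (Metric.sphere (0 : EuclideanSpace ℝ (Fin N)) 1),
      (∀ n, FinitelySupported (σ n)) ∧
      (∀ n, ∀ K ∈ H, 0 ≤ sintegral (σ n)
        (fun u => suppFn K (u : EuclideanSpace ℝ (Fin N)))) ∧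
      ∀ f : C(Metric.sphere (0 : EuclideanSpace ℝ (Fin N)) 1, ℝ),
        Tendsto (fun n => sintegral (σ n) f) atTop (𝓝 (sintegral μ f)) := by
  classical
  obtain ⟨p, u, hu⟩ := net_exists (N := N) (1/2) (by norm_num)
  set M : ℝ := (μ.toJordanDecomposition.posPart Set.univ).toReal
      + (μ.toJordanDecomposition.negPart Set.univ).toReal with hM
  have hM0 : 0 ≤ M := by rw [hM]; positivity
  have main : ∀ n : ℕ, ∃ σn : SignedMeasure (Sp N), FinitelySupported σn ∧
      (∀ K ∈ H, 0 ≤ sintegral σn (fun x => suppFn K (x : EuclideanSpace ℝ (Fin N)))) ∧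
      (∀ f : Sp N → ℝ, Continuous f → ∀ Cf : ℝ, 0 ≤ Cf → (∀ x, |f x| ≤ Cf) →
        ∀ ε : ℝ, 0 ≤ ε →
        (∀ x y : Sp N, dist x y < ((n:ℝ)+1)⁻¹ → |f x - f y| ≤ ε) →
        |sintegral σn f - sintegral μ f| ≤
          ε * M + ((n:ℝ)+1)⁻¹ * (M * Cf) + ((n:ℝ)+1)⁻¹ * (6 * p * M * Cf)) := by
    intro n
    exact exists_approx hN H hne hcomp μ hμ u hu (by positivity) M hM
  choose σn hFS hposit hbound using main
  refine ⟨σn, hFS, hposit, ?_⟩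
  intro f
  rw [Metric.tendsto_atTop]
  intro ε₀ hε₀
  have hfb : ∀ x, |f x| ≤ ‖f‖ := fun x => by
    rw [← Real.norm_eq_abs]; exact f.norm_coe_le_norm x
  have huc : UniformContinuous f := CompactSpace.uniformContinuous_of_continuous f.continuous
  set ε : ℝ := ε₀ / (2 * (M + 1)) with hεdef
  have hεpos : 0 < ε := by rw [hεdef]; positivity
  obtain ⟨δs, hδs0, hδs⟩ := Metric.uniformContinuous_iff.1 huc ε hεpos
  set Cst : ℝ := M * ‖f‖ + 6 * p * M * ‖f‖ with hCst
  have hCst0 : 0 ≤ Cst := by rw [hCst]; positivity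
  have hmin : 0 < min δs (ε₀ / (2 * (Cst + 1))) := by
    refine lt_min hδs0 ?_
    positivity
  obtain ⟨n₀, hn₀⟩ := exists_nat_one_div_lt hmin
  refine ⟨n₀, fun n hn => ?_⟩
  have hδn0 : (0:ℝ) < ((n:ℝ)+1)⁻¹ := by positivity
  have hδnle : ((n:ℝ)+1)⁻¹ ≤ ((n₀:ℝ)+1)⁻¹ := by
    apply inv_anti₀ (by positivity)
    have : (n₀ : ℝ) ≤ (n : ℝ) := Nat.cast_le.2 hn
    linarith
  have hδsmall : ((n₀:ℝ)+1)⁻¹ < min δs (ε₀ / (2 * (Cst + 1))) := by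
    rw [← one_div]
    exact hn₀
  have h1 : ((n:ℝ)+1)⁻¹ < δs :=
    lt_of_le_of_lt hδnle (lt_of_lt_of_le hδsmall (min_le_left _ _))
  have h2 : ((n:ℝ)+1)⁻¹ < ε₀ / (2 * (Cst + 1)) :=
    lt_of_le_of_lt hδnle (lt_of_lt_of_le hδsmall (min_le_right _ _))
  have hmod : ∀ x y : Sp N, dist x y < ((n:ℝ)+1)⁻¹ → |f x - f y| ≤ ε := by
    intro x y hxy
    have := hδs (lt_trans hxy h1)
    rw [Real.dist_eq] at this
    exact this.le
  have hb := hbound n f f.continuous ‖f‖ (norm_nonneg f) hfb ε hεpos.le hmod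
  rw [Real.dist_eq]
  have hεM : ε * M ≤ ε₀ / 2 := by
    have h3 : ε * M ≤ ε * (M + 1) := mul_le_mul_of_nonneg_left (by linarith) hεpos.le
    have h4 : ε * (M + 1) = ε₀ / 2 := by
      rw [hεdef]
      field_simp
    linarith
  have hrest : ((n:ℝ)+1)⁻¹ * (M * ‖f‖) + ((n:ℝ)+1)⁻¹ * (6 * p * M * ‖f‖) < ε₀ / 2 := by
    have h5 : ((n:ℝ)+1)⁻¹ * (M * ‖f‖) + ((n:ℝ)+1)⁻¹ * (6 * p * M * ‖f‖)
        = ((n:ℝ)+1)⁻¹ * Cst := by rw [hCst]; ring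
    rw [h5]
    have h6 : ((n:ℝ)+1)⁻¹ * Cst ≤ ((n:ℝ)+1)⁻¹ * (Cst + 1) :=
      mul_le_mul_of_nonneg_left (by linarith) hδn0.le
    have h7 : ((n:ℝ)+1)⁻¹ * (Cst + 1) < (ε₀ / (2 * (Cst + 1))) * (Cst + 1) :=
      mul_lt_mul_of_pos_right h2 (by linarith)
    have h8 : (ε₀ / (2 * (Cst + 1))) * (Cst + 1) = ε₀ / 2 := by
      field_simp
    linarith
  calc |sintegral (σn n) f - sintegral μ f|
      ≤ ε * M + ((n:ℝ)+1)⁻¹ * (M * ‖f‖) + ((n:ℝ)+1)⁻¹ * (6 * p * M * ‖f‖) := hb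
    _ < ε₀ := by linarith
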